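/- For every real number B > 1, lim_{α→∞} s_B(α) = s_B, i.e. the quantities s_B(α) associated with the truncated alphabets {1, 2, …, α} converge, as α → ∞, to the quantity s_B associated with the full alphabet of all positive integers. -/

import Mathlib

open Filter Topology MeasureTheory

/-- The Gauss map `T(x) = 1/x mod 1`. -/
noncomputable def gaussMap (x : ℝ) : ℝ := Int.fract (1 / x)

/-- The `n`-th continued fraction partial quotient of `x`:
`a_n(x) = ⌊1 / T^{n-1}(x)⌋` for `n ≥ 1`. -/
noncomputable def cfa (n : ℕ) (x : ℝ) : ℤ := ⌊1 / (gaussMap^[n - 1] x)⌋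

/-- The set of irrational `x ∈ [0,1)` whose odd-order partial quotients all equal 1. -/
def Ieven : Set ℝ :=
  {x | x ∈ Set.Ico (0 : ℝ) 1 ∧ Irrational x ∧ ∀ k : ℕ, cfa (2 * k + 1) x = 1}

/-- Given `[a_2, a_4, …, a_{2n}]`, the denominator `q_{2n}` of
`[0; 1, a_2, 1, a_4, …, 1, a_{2n}]` (with `q_0 = q_1 = 1`,
`q_{2j} = a_{2j} q_{2j-1} + q_{2j-2}`, `q_{2j+1} = q_{2j} + q_{2j-1}`). -/
def qEven (l : List ℕ) : ℕ :=
  (l.foldl (fun p a => (p.2 + p.1, a * (p.2 + p.1) + p.2)) ((0 : ℕ), (1 : ℕ))).2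

/-- `f_{n,B}(ρ) = Σ_{a_2,…,a_{2n} ∈ 𝒜} (B^{2n} q_{2n}²)^{−ρ}`. -/
noncomputable def fnB (A : Set ℕ) (B : ℝ) (n : ℕ) (ρ : ℝ) : ENNReal :=
  ∑' v : Fin n → A,
    ENNReal.ofReal ((B ^ (2 * n) * (qEven (List.ofFn fun i => (v i : ℕ)) : ℝ) ^ 2) ^ (-ρ))

/-- `s_{n,B}(𝒜) = inf {ρ ≥ 0 : f_{n,B}(ρ) ≤ 1}`. -/
noncomputable def snB (A : Set ℕ) (B : ℝ) (n : ℕ) : ℝ :=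
  sInf {ρ : ℝ | 0 ≤ ρ ∧ fnB A B n ρ ≤ 1}

/-- `q_n(x)`: denominator of the `n`-th convergent of `x`. -/
noncomputable def qden (x : ℝ) : ℕ → ℤ
  | 0 => 1
  | 1 => cfa 1 x
  | (n + 2) => cfa (n + 2) x * qden x (n + 1) + qden x n

/-- `p_n(x)`: numerator of the `n`-th convergent of `x ∈ [0,1)`. -/
noncomputable def pnum (x : ℝ) : ℕ → ℤ
  | 0 => 0
  | 1 => 1
  | (n + 2) => cfa (n + 2) x * pnum x (n + 1) + pnum x n

namespace SBaux

/-! ### Continuant (qEven) lemmas -/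

def qstep : ℕ × ℕ → ℕ → ℕ × ℕ := fun p a => (p.2 + p.1, a * (p.2 + p.1) + p.2)

lemma qEven_eq (l : List ℕ) : qEven l = (l.foldl qstep (0,1)).2 := rfl

lemma foldl_lin (l : List ℕ) (s : ℕ × ℕ) :
    l.foldl qstep s =
      (s.1 * (l.foldl qstep (1,0)).1 + s.2 * (l.foldl qstep (0,1)).1,
       s.1 * (l.foldl qstep (1,0)).2 + s.2 * (l.foldl qstep (0,1)).2) := by
  induction l generalizing s with
  | nil => simp
  | cons a t ih =>
    simp only [List.foldl_cons]
    rw [ih (qstep s a), ih (qstep (1,0) a), ih (qstep (0,1) a)]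
    simp only [qstep, Prod.mk.injEq]
    constructor <;> ring

lemma foldl_mono (l : List ℕ) {s t : ℕ × ℕ} (h1 : s.1 ≤ t.1) (h2 : s.2 ≤ t.2) :
    (l.foldl qstep s).1 ≤ (l.foldl qstep t).1 ∧ (l.foldl qstep s).2 ≤ (l.foldl qstep t).2 := by
  induction l generalizing s t with
  | nil => exact ⟨h1, h2⟩
  | cons a u ih =>
    simp only [List.foldl_cons]
    exact ih (by simp [qstep]; omega)
      (by simp [qstep]; exact Nat.add_le_add (Nat.mul_le_mul_left a (by omega)) h2)

lemma one_le_snd (l : List ℕ) {s : ℕ × ℕ} (h : 1 ≤ s.2) : 1 ≤ (l.foldl qstep s).2 := by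
  induction l generalizing s with
  | nil => exact h
  | cons a u ih => exact ih (by simp [qstep]; omega)

lemma fst_le_snd (l : List ℕ) (hl : ∀ a ∈ l, 1 ≤ a) {s : ℕ × ℕ} (h : s.1 ≤ s.2) :
    (l.foldl qstep s).1 ≤ (l.foldl qstep s).2 := by
  induction l generalizing s with
  | nil => exact h
  | cons a u ih =>
    refine ih (fun b hb => hl b (List.mem_cons_of_mem a hb)) ?_
    have ha : 1 ≤ a := hl a List.mem_cons_self
    simp only [qstep]
    nlinarith

lemma col_le (l : List ℕ) : (l.foldl qstep (1,0)).2 ≤ (l.foldl qstep (0,1)).2 := by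
  cases l with
  | nil => simp
  | cons a t =>
    simp only [List.foldl_cons]
    exact (foldl_mono t (by simp [qstep]) (by simp [qstep])).2

lemma one_le_qEven (l : List ℕ) : 1 ≤ qEven l := one_le_snd l (by norm_num)

lemma qEven_append (l₁ l₂ : List ℕ) : qEven (l₁ ++ l₂) =
    (l₁.foldl qstep (0,1)).1 * (l₂.foldl qstep (1,0)).2
      + (l₁.foldl qstep (0,1)).2 * (l₂.foldl qstep (0,1)).2 := by
  rw [qEven_eq, List.foldl_append, foldl_lin]

lemma qEven_append_ge (l₁ l₂ : List ℕ) : qEven l₁ * qEven l₂ ≤ qEven (l₁ ++ l₂) := by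
  rw [qEven_append]
  simp only [qEven_eq]
  exact Nat.le_add_left _ _

lemma qEven_append_le (l₁ l₂ : List ℕ) (h₁ : ∀ a ∈ l₁, 1 ≤ a) :
    qEven (l₁ ++ l₂) ≤ 2 * (qEven l₁ * qEven l₂) := by
  rw [qEven_append]
  simp only [qEven_eq]
  have h1 := fst_le_snd l₁ h₁ (by norm_num : ((0:ℕ),(1:ℕ)).1 ≤ ((0:ℕ),(1:ℕ)).2)
  have h2 := col_le l₂
  calc (l₁.foldl qstep (0,1)).1 * (l₂.foldl qstep (1,0)).2
        + (l₁.foldl qstep (0,1)).2 * (l₂.foldl qstep (0,1)).2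
      ≤ (l₁.foldl qstep (0,1)).2 * (l₂.foldl qstep (0,1)).2
        + (l₁.foldl qstep (0,1)).2 * (l₂.foldl qstep (0,1)).2 :=
        Nat.add_le_add_right (Nat.mul_le_mul h1 h2) _
    _ = 2 * ((l₁.foldl qstep (0,1)).2 * (l₂.foldl qstep (0,1)).2) := by ring

lemma qEven_singleton (a : ℕ) : qEven [a] = a + 1 := by simp [qEven]

lemma prod_le_qEven (l : List ℕ) : l.prod ≤ qEven l := by
  induction l with
  | nil => simp [qEven]
  | cons a t ih =>
    calc (a :: t).prod = a * t.prod := List.prod_cons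
      _ ≤ (a + 1) * qEven t := Nat.mul_le_mul (Nat.le_succ a) ih
      _ = qEven [a] * qEven t := by rw [qEven_singleton]
      _ ≤ qEven ([a] ++ t) := qEven_append_ge [a] t
      _ = qEven (a :: t) := rfl

/-! ### The summand -/

noncomputable def tm (B ρ : ℝ) (n : ℕ) (w : Fin n → ℕ) : ENNReal :=
  ENNReal.ofReal ((B ^ (2 * n) * (qEven (List.ofFn w) : ℝ) ^ 2) ^ (-ρ))

lemma fnB_eq (A : Set ℕ) (B : ℝ) (n : ℕ) (ρ : ℝ) :
    fnB A B n ρ = ∑' v : Fin n → A, tm B ρ n (fun i => (v i : ℕ)) := rfl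

lemma one_le_X {B : ℝ} (hB : 1 ≤ B) (n : ℕ) (w : Fin n → ℕ) :
    1 ≤ B ^ (2 * n) * (qEven (List.ofFn w) : ℝ) ^ 2 := by
  have h1 : (1:ℝ) ≤ B ^ (2*n) := one_le_pow₀ hB
  have h2 : (1:ℝ) ≤ (qEven (List.ofFn w) : ℝ) := by exact_mod_cast one_le_qEven _
  nlinarith

lemma X_pos {B : ℝ} (hB : 1 ≤ B) (n : ℕ) (w : Fin n → ℕ) :
    0 < B ^ (2 * n) * (qEven (List.ofFn w) : ℝ) ^ 2 :=
  lt_of_lt_of_le one_pos (one_le_X hB n w)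

lemma tm_anti {B : ℝ} (hB : 1 ≤ B) {ρ ρ' : ℝ} (h : ρ ≤ ρ') (n : ℕ) (w : Fin n → ℕ) :
    tm B ρ' n w ≤ tm B ρ n w :=
  ENNReal.ofReal_le_ofReal
    (Real.rpow_le_rpow_of_exponent_le (one_le_X hB n w) (neg_le_neg h))

lemma fnB_anti (A : Set ℕ) {B : ℝ} (hB : 1 ≤ B) {ρ ρ' : ℝ} (h : ρ ≤ ρ') (n : ℕ) :
    fnB A B n ρ' ≤ fnB A B n ρ := by
  rw [fnB_eq, fnB_eq]
  exact ENNReal.tsum_le_tsum fun v => tm_anti hB h n _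

lemma fnB_mono_set {A A' : Set ℕ} (h : A ⊆ A') (B : ℝ) (n : ℕ) (ρ : ℝ) :
    fnB A B n ρ ≤ fnB A' B n ρ := by
  rw [fnB_eq, fnB_eq]
  have hinj : Function.Injective
      (fun (v : Fin n → A) => (fun i => (⟨(v i : ℕ), h (v i).2⟩ : A')) : (Fin n → A) → (Fin n → A')) := by
    intro v w hvw
    funext i
    have h := congrFun hvw i
    simp only [Subtype.mk.injEq] at h
    exact Subtype.ext h
  simpa using ENNReal.tsum_comp_le_tsum_of_injective hinj (fun w => tm B ρ n (fun i => (w i : ℕ)))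

lemma fnB_zero (A : Set ℕ) (B ρ : ℝ) : fnB A B 0 ρ = 1 := by
  rw [fnB_eq]
  have ht : ∀ v : Fin 0 → A, tm B ρ 0 (fun i => (v i : ℕ)) = 1 := by
    intro v
    simp [tm, List.ofFn_zero, qEven, Real.one_rpow]
  haveI : Unique (Fin 0 → A) := ⟨⟨fun i => i.elim0⟩, fun v => funext fun i => i.elim0⟩
  rw [tsum_congr ht, tsum_eq_single (default : Fin 0 → A)
    (fun b hb => absurd (Subsingleton.elim b default) hb)]

/-! ### Splitting of sums -/

lemma coe_append {A : Set ℕ} (m n : ℕ) (u : Fin m → A) (v : Fin n → A) :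
    (fun i => ((Fin.append u v i : A) : ℕ)) = Fin.append (fun i => (u i : ℕ)) (fun j => (v j : ℕ)) := by
  funext i
  induction i using Fin.addCases with
  | left i => simp [Fin.append_left]
  | right j => simp [Fin.append_right]

lemma ofFn_append {m n : ℕ} (u : Fin m → ℕ) (v : Fin n → ℕ) :
    List.ofFn (Fin.append u v) = List.ofFn u ++ List.ofFn v := by
  rw [List.ofFn_add]
  simp [Fin.append_left, Fin.append_right]

lemma tm_append_le {B : ℝ} (hB : 1 ≤ B) {ρ : ℝ} (hρ : 0 ≤ ρ) {m n : ℕ}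
    (u : Fin m → ℕ) (v : Fin n → ℕ) :
    tm B ρ (m + n) (Fin.append u v) ≤ tm B ρ m u * tm B ρ n v := by
  unfold tm
  rw [ofFn_append]
  set X := B ^ (2 * m) * (qEven (List.ofFn u) : ℝ) ^ 2 with hX
  set Y := B ^ (2 * n) * (qEven (List.ofFn v) : ℝ) ^ 2 with hY
  set Z := B ^ (2 * (m + n)) * (qEven (List.ofFn u ++ List.ofFn v) : ℝ) ^ 2 with hZ
  have hXpos : 0 < X := X_pos hB m u
  have hYpos : 0 < Y := X_pos hB n v
  have hq : ((qEven (List.ofFn u) * qEven (List.ofFn v) : ℕ) : ℝ)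
      ≤ ((qEven (List.ofFn u ++ List.ofFn v) : ℕ) : ℝ) := by
    exact_mod_cast qEven_append_ge (List.ofFn u) (List.ofFn v)
  have hXY : X * Y ≤ Z := by
    rw [hX, hY, hZ, show 2 * (m + n) = 2 * m + 2 * n by ring, pow_add]
    push_cast at hq
    have h1 : (0:ℝ) ≤ (qEven (List.ofFn u) : ℝ) * (qEven (List.ofFn v) : ℝ) := by positivity
    have hBpos : (0:ℝ) < B := lt_of_lt_of_le one_pos hB
    have h2 : (0:ℝ) < B ^ (2*m) * B ^ (2*n) := by positivity
    have h3 : ((qEven (List.ofFn u) : ℝ) * (qEven (List.ofFn v) : ℝ)) ^ 2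
        ≤ (qEven (List.ofFn u ++ List.ofFn v) : ℝ) ^ 2 := pow_le_pow_left₀ h1 hq 2
    calc B ^ (2*m) * (qEven (List.ofFn u) : ℝ) ^ 2 * (B ^ (2*n) * (qEven (List.ofFn v) : ℝ) ^ 2)
        = B ^ (2*m) * B ^ (2*n) * ((qEven (List.ofFn u) : ℝ) * (qEven (List.ofFn v) : ℝ)) ^ 2 := by ring
      _ ≤ B ^ (2*m) * B ^ (2*n) * (qEven (List.ofFn u ++ List.ofFn v) : ℝ) ^ 2 :=
          mul_le_mul_of_nonneg_left h3 h2.le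
  have hZneg : Z ^ (-ρ) ≤ (X * Y) ^ (-ρ) := by
    rw [Real.rpow_neg (by positivity), Real.rpow_neg (le_of_lt (mul_pos hXpos hYpos))]
    exact inv_anti₀ (Real.rpow_pos_of_pos (mul_pos hXpos hYpos) ρ)
      (Real.rpow_le_rpow (le_of_lt (mul_pos hXpos hYpos)) hXY hρ)
  calc ENNReal.ofReal (Z ^ (-ρ)) ≤ ENNReal.ofReal ((X * Y) ^ (-ρ)) :=
        ENNReal.ofReal_le_ofReal hZneg
    _ = ENNReal.ofReal (X ^ (-ρ) * Y ^ (-ρ)) := by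
        rw [Real.mul_rpow (le_of_lt hXpos) (le_of_lt hYpos)]
    _ = ENNReal.ofReal (X ^ (-ρ)) * ENNReal.ofReal (Y ^ (-ρ)) :=
        ENNReal.ofReal_mul (Real.rpow_nonneg (le_of_lt hXpos) _)

lemma tm_append_ge {B : ℝ} (hB : 1 ≤ B) {ρ : ℝ} (hρ : 0 ≤ ρ) {m n : ℕ}
    (u : Fin m → ℕ) (v : Fin n → ℕ) (hu : ∀ i, 1 ≤ u i) :
    ENNReal.ofReal ((4:ℝ) ^ (-ρ)) * (tm B ρ m u * tm B ρ n v)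
      ≤ tm B ρ (m + n) (Fin.append u v) := by
  unfold tm
  rw [ofFn_append]
  set X := B ^ (2 * m) * (qEven (List.ofFn u) : ℝ) ^ 2 with hX
  set Y := B ^ (2 * n) * (qEven (List.ofFn v) : ℝ) ^ 2 with hY
  set Z := B ^ (2 * (m + n)) * (qEven (List.ofFn u ++ List.ofFn v) : ℝ) ^ 2 with hZ
  have hXpos : 0 < X := X_pos hB m u
  have hYpos : 0 < Y := X_pos hB n v
  have hq : ((qEven (List.ofFn u ++ List.ofFn v) : ℕ) : ℝ)
      ≤ 2 * ((qEven (List.ofFn u) : ℝ) * (qEven (List.ofFn v) : ℝ)) := by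
    have := qEven_append_le (List.ofFn u) (List.ofFn v) (by
      intro a ha
      obtain ⟨i, hi⟩ := List.mem_ofFn.1 ha
      exact hi ▸ hu i)
    exact_mod_cast this
  have hZpos : 0 < Z := by
    rw [hZ]
    have hq1 : (1:ℝ) ≤ (qEven (List.ofFn u ++ List.ofFn v) : ℝ) := by
      exact_mod_cast one_le_qEven _
    have hBpos : (0:ℝ) < B := lt_of_lt_of_le one_pos hB
    exact mul_pos (pow_pos hBpos _) (pow_pos (lt_of_lt_of_le one_pos hq1) 2)
  have hZXY : Z ≤ 4 * (X * Y) := by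
    rw [hX, hY, hZ, show 2 * (m + n) = 2 * m + 2 * n by ring, pow_add]
    have h0 : (0:ℝ) ≤ (qEven (List.ofFn u ++ List.ofFn v) : ℝ) := by positivity
    have hBpos : (0:ℝ) < B := lt_of_lt_of_le one_pos hB
    have h2 : (0:ℝ) < B ^ (2*m) * B ^ (2*n) := by positivity
    have h3 : (qEven (List.ofFn u ++ List.ofFn v) : ℝ) ^ 2
        ≤ (2 * ((qEven (List.ofFn u) : ℝ) * (qEven (List.ofFn v) : ℝ))) ^ 2 := pow_le_pow_left₀ h0 hq 2
    calc B ^ (2*m) * B ^ (2*n) * (qEven (List.ofFn u ++ List.ofFn v) : ℝ) ^ 2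
        ≤ B ^ (2*m) * B ^ (2*n) * (2 * ((qEven (List.ofFn u) : ℝ) * (qEven (List.ofFn v) : ℝ))) ^ 2 :=
          mul_le_mul_of_nonneg_left h3 h2.le
      _ = 4 * (B ^ (2*m) * (qEven (List.ofFn u) : ℝ) ^ 2 * (B ^ (2*n) * (qEven (List.ofFn v) : ℝ) ^ 2)) := by ring
  have hZneg : (4 * (X * Y)) ^ (-ρ) ≤ Z ^ (-ρ) := by
    rw [Real.rpow_neg (by positivity), Real.rpow_neg hZpos.le]
    exact inv_anti₀ (Real.rpow_pos_of_pos hZpos ρ)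
      (Real.rpow_le_rpow hZpos.le hZXY hρ)
  have hXpos' := Real.rpow_nonneg hXpos.le (-ρ)
  have hYpos' := Real.rpow_nonneg hYpos.le (-ρ)
  calc ENNReal.ofReal ((4:ℝ) ^ (-ρ)) * (ENNReal.ofReal (X ^ (-ρ)) * ENNReal.ofReal (Y ^ (-ρ)))
      = ENNReal.ofReal ((4:ℝ) ^ (-ρ) * (X ^ (-ρ) * Y ^ (-ρ))) := by
        rw [← ENNReal.ofReal_mul hXpos',
          ← ENNReal.ofReal_mul (Real.rpow_nonneg (by norm_num : (0:ℝ) ≤ 4) (-ρ))]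
    _ = ENNReal.ofReal ((4 * (X * Y)) ^ (-ρ)) := by
        rw [Real.mul_rpow (by norm_num) (le_of_lt (mul_pos hXpos hYpos)),
          Real.mul_rpow hXpos.le hYpos.le]
    _ ≤ ENNReal.ofReal (Z ^ (-ρ)) := ENNReal.ofReal_le_ofReal hZneg

/-! ### Splitting fnB over concatenation -/

lemma fnB_split (A : Set ℕ) (B ρ : ℝ) (m n : ℕ) :
    fnB A B (m + n) ρ = ∑' p : (Fin m → A) × (Fin n → A),
      tm B ρ (m + n) (Fin.append (fun i => (p.1 i : ℕ)) (fun j => (p.2 j : ℕ))) := by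
  rw [fnB_eq, ← (Fin.appendEquiv (α := A) m n).tsum_eq]
  refine tsum_congr fun p => ?_
  have : (fun i => ((Fin.appendEquiv (α := A) m n p) i : ℕ))
      = Fin.append (fun i => (p.1 i : ℕ)) (fun j => (p.2 j : ℕ)) := by
    rw [show Fin.appendEquiv (α := A) m n p = Fin.append p.1 p.2 from rfl]
    exact coe_append m n p.1 p.2
  rw [this]

lemma fnB_submul (A : Set ℕ) {B : ℝ} (hB : 1 ≤ B) {ρ : ℝ} (hρ : 0 ≤ ρ) (m n : ℕ) :
    fnB A B (m + n) ρ ≤ fnB A B m ρ * fnB A B n ρ := by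
  rw [fnB_split]
  calc ∑' p : (Fin m → A) × (Fin n → A),
        tm B ρ (m + n) (Fin.append (fun i => (p.1 i : ℕ)) (fun j => (p.2 j : ℕ)))
      ≤ ∑' p : (Fin m → A) × (Fin n → A),
        tm B ρ m (fun i => (p.1 i : ℕ)) * tm B ρ n (fun j => (p.2 j : ℕ)) :=
        ENNReal.tsum_le_tsum fun p => tm_append_le hB hρ _ _
    _ = fnB A B m ρ * fnB A B n ρ := by
        rw [ENNReal.tsum_prod']
        simp_rw [ENNReal.tsum_mul_left]
        rw [ENNReal.tsum_mul_right, fnB_eq, fnB_eq]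

lemma fnB_supermul {A : Set ℕ} (hA : ∀ a ∈ A, 1 ≤ a) {B : ℝ} (hB : 1 ≤ B) {ρ : ℝ}
    (hρ : 0 ≤ ρ) (m n : ℕ) :
    ENNReal.ofReal ((4:ℝ) ^ (-ρ)) * (fnB A B m ρ * fnB A B n ρ) ≤ fnB A B (m + n) ρ := by
  rw [fnB_split]
  have hrw : ENNReal.ofReal ((4:ℝ) ^ (-ρ)) * (fnB A B m ρ * fnB A B n ρ)
      = ∑' p : (Fin m → A) × (Fin n → A),
        ENNReal.ofReal ((4:ℝ) ^ (-ρ)) *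
          (tm B ρ m (fun i => (p.1 i : ℕ)) * tm B ρ n (fun j => (p.2 j : ℕ))) := by
    rw [ENNReal.tsum_prod']
    simp_rw [ENNReal.tsum_mul_left]
    rw [ENNReal.tsum_mul_right, fnB_eq, fnB_eq]
  rw [hrw]
  refine ENNReal.tsum_le_tsum fun p => ?_
  exact tm_append_ge hB hρ _ _ (fun i => hA _ (p.1 i).2)

/-! ### Product form of sums over tuples -/

lemma tsum_pi_prod {β : Type*} (g : β → ENNReal) :
    ∀ n : ℕ, (∑' v : Fin n → β, ∏ i, g (v i)) = (∑' b, g b) ^ n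
  | 0 => by
    haveI : Unique (Fin 0 → β) := ⟨⟨fun i => i.elim0⟩, fun v => funext fun i => i.elim0⟩
    rw [tsum_congr (fun v : Fin 0 → β => (Finset.prod_of_isEmpty _ : ∏ i, g (v i) = 1)),
      tsum_eq_single (default : Fin 0 → β)
        (fun b hb => absurd (Subsingleton.elim b default) hb)]
    simp
  | (n + 1) => by
    rw [← (Fin.consEquiv (fun _ : Fin (n+1) => β)).tsum_eq]
    have hterm : ∀ p : β × (Fin n → β),
        (∏ i, g ((Fin.consEquiv (fun _ : Fin (n+1) => β)) p i)) = g p.1 * ∏ i, g (p.2 i) := by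
      intro p
      have : (fun i => g ((Fin.consEquiv (fun _ : Fin (n+1) => β)) p i))
          = Fin.cons (g p.1) (fun i => g (p.2 i)) := by
        funext i
        rw [show (Fin.consEquiv (fun _ : Fin (n+1) => β)) p = Fin.cons p.1 p.2 from rfl]
        induction i using Fin.cases with
        | zero => simp
        | succ j => simp
      rw [this, Fin.prod_cons]
    rw [tsum_congr hterm, ENNReal.tsum_prod']
    simp_rw [ENNReal.tsum_mul_left]
    rw [ENNReal.tsum_mul_right, tsum_pi_prod g n, pow_succ, mul_comm]

/-! ### A uniform ρ making all the sums at most 1 -/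

lemma exists_rho_star {B : ℝ} (hB : 1 < B) :
    ∃ ρ : ℝ, 1 ≤ ρ ∧ ∀ n, fnB {m : ℕ | 1 ≤ m} B n ρ ≤ 1 := by
  classical
  have hB1 : (1:ℝ) ≤ B := hB.le
  have hBpos : (0:ℝ) < B := lt_of_lt_of_le one_pos hB1
  set C : ℝ := ∑' m : ℕ, (((m:ℝ))^2)⁻¹ with hCdef
  have hCsum : Summable (fun m : ℕ => (((m:ℝ))^2)⁻¹) := by
    have := Real.summable_one_div_nat_pow.2 (by norm_num : 1 < 2)
    simpa [one_div] using this
  have hC0 : 0 ≤ C := tsum_nonneg fun m => by positivity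
  have hB2 : (1:ℝ) < B^2 := by nlinarith
  obtain ⟨k, hk⟩ := pow_unbounded_of_one_lt C hB2
  set ρ : ℝ := ((max 1 k : ℕ) : ℝ) with hρdef
  have hρ1 : (1:ℝ) ≤ ρ := by
    rw [hρdef]
    exact_mod_cast Nat.le_max_left 1 k
  have hρ0 : (0:ℝ) ≤ ρ := by linarith
  refine ⟨ρ, hρ1, fun n => ?_⟩
  set g : ℕ → ENNReal := fun a => ENNReal.ofReal ((B^2 * ((a:ℝ))^2) ^ (-ρ)) with hgdef
  -- termwise bound
  have key : ∀ v : Fin n → {m : ℕ | 1 ≤ m},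
      tm B ρ n (fun i => (v i : ℕ)) ≤ ∏ i, g ((v i : ℕ)) := by
    intro v
    set w : Fin n → ℕ := fun i => (v i : ℕ) with hwdef
    have hw1 : ∀ i, 1 ≤ w i := fun i => (v i).2
    have hP : ∀ i, (0:ℝ) < B^2 * ((w i : ℝ))^2 := by
      intro i
      have : (1:ℝ) ≤ (w i : ℝ) := by exact_mod_cast hw1 i
      nlinarith
    have hPX : (∏ i, (B^2 * ((w i : ℝ))^2)) ≤ B ^ (2*n) * ((qEven (List.ofFn w) : ℝ))^2 := by
      have hprod : ((List.ofFn w).prod : ℝ) ≤ ((qEven (List.ofFn w) : ℕ) : ℝ) := by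
        exact_mod_cast prod_le_qEven (List.ofFn w)
      have hprod0 : (0:ℝ) ≤ ((List.ofFn w).prod : ℝ) := by positivity
      have hsq : (((List.ofFn w).prod : ℝ))^2 ≤ ((qEven (List.ofFn w) : ℝ))^2 :=
        pow_le_pow_left₀ hprod0 hprod 2
      have hsplit : (∏ i, (B^2 * ((w i : ℝ))^2))
          = B ^ (2*n) * (((List.ofFn w).prod : ℝ))^2 := by
        rw [Finset.prod_mul_distrib, Finset.prod_const, Finset.card_univ, Fintype.card_fin,
          ← pow_mul]
        congr 1
        rw [Finset.prod_pow]
        congr 1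
        rw [List.prod_ofFn, Nat.cast_prod]
      rw [hsplit]
      exact mul_le_mul_of_nonneg_left hsq (by positivity)
    have hPpos : (0:ℝ) < ∏ i, (B^2 * ((w i : ℝ))^2) := Finset.prod_pos fun i _ => hP i
    have hle : (B ^ (2*n) * ((qEven (List.ofFn w) : ℝ))^2) ^ (-ρ)
        ≤ (∏ i, (B^2 * ((w i : ℝ))^2)) ^ (-ρ) := by
      rw [Real.rpow_neg (by positivity), Real.rpow_neg hPpos.le]
      exact inv_anti₀ (Real.rpow_pos_of_pos hPpos ρ)
        (Real.rpow_le_rpow hPpos.le hPX hρ0)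
    calc tm B ρ n w ≤ ENNReal.ofReal ((∏ i, (B^2 * ((w i : ℝ))^2)) ^ (-ρ)) :=
          ENNReal.ofReal_le_ofReal hle
      _ = ENNReal.ofReal (∏ i, (B^2 * ((w i : ℝ))^2) ^ (-ρ)) := by
          rw [← Real.finset_prod_rpow _ _ (fun i _ => (hP i).le)]
      _ = ∏ i, g (w i) := by
          rw [ENNReal.ofReal_prod_of_nonneg (fun i _ => Real.rpow_nonneg (hP i).le _)]
  have step1 : fnB {m : ℕ | 1 ≤ m} B n ρ ≤ (∑' a : {m : ℕ | 1 ≤ m}, g (a : ℕ)) ^ n := by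
    rw [fnB_eq, ← tsum_pi_prod (fun b : {m : ℕ | 1 ≤ m} => g (b : ℕ)) n]
    exact ENNReal.tsum_le_tsum key
  have step2 : (∑' a : {m : ℕ | 1 ≤ m}, g (a : ℕ)) ≤ ∑' a : ℕ, g a :=
    ENNReal.tsum_comp_le_tsum_of_injective Subtype.coe_injective g
  have step3 : (∑' a : ℕ, g a) ≤ ENNReal.ofReal ((B^2)^(-ρ) * C) := by
    have hbound : ∀ a : ℕ, g a ≤ ENNReal.ofReal ((B^2)^(-ρ) * (((a:ℝ))^2)⁻¹) := by
      intro a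
      rcases Nat.eq_zero_or_pos a with rfl | ha
      · refine le_trans (le_of_eq ?_) zero_le
        show ENNReal.ofReal ((B ^ 2 * (((0:ℕ):ℝ)) ^ 2) ^ (-ρ)) = 0
        have h0 : B^2 * (((0:ℕ):ℝ))^2 = 0 := by norm_num
        rw [h0, Real.zero_rpow (by intro h; rw [neg_eq_zero] at h; linarith)]
        simp
      · have ha1 : (1:ℝ) ≤ (a:ℝ) := by exact_mod_cast ha
        have h1 : (1:ℝ) ≤ ((a:ℝ))^2 := by nlinarith
        unfold g
        apply ENNReal.ofReal_le_ofReal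
        rw [Real.mul_rpow (by positivity) (by positivity)]
        apply mul_le_mul_of_nonneg_left _ (Real.rpow_nonneg (by positivity) _)
        calc (((a:ℝ))^2) ^ (-ρ) ≤ (((a:ℝ))^2) ^ (-1:ℝ) :=
              Real.rpow_le_rpow_of_exponent_le h1 (by linarith)
          _ = (((a:ℝ))^2)⁻¹ := Real.rpow_neg_one _
    calc (∑' a : ℕ, g a) ≤ ∑' a : ℕ, ENNReal.ofReal ((B^2)^(-ρ) * (((a:ℝ))^2)⁻¹) :=
          ENNReal.tsum_le_tsum hbound
      _ = ENNReal.ofReal ((B^2)^(-ρ)) * ∑' a : ℕ, ENNReal.ofReal ((((a:ℝ))^2)⁻¹) := by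
          have hnn : (0:ℝ) ≤ (B^2) ^ (-ρ) := Real.rpow_nonneg (by positivity) _
          simp_rw [ENNReal.ofReal_mul hnn]
          rw [ENNReal.tsum_mul_left]
      _ = ENNReal.ofReal ((B^2)^(-ρ)) * ENNReal.ofReal C := by
          rw [← ENNReal.ofReal_tsum_of_nonneg (fun a => by positivity) hCsum]
      _ = ENNReal.ofReal ((B^2)^(-ρ) * C) :=
          (ENNReal.ofReal_mul (Real.rpow_nonneg (by positivity) _)).symm
  have step4 : (B^2)^(-ρ) * C ≤ 1 := by
    have hkle : C ≤ (B^2)^ρ := by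
      rw [hρdef, Real.rpow_natCast]
      calc C ≤ (B^2)^k := hk.le
        _ ≤ (B^2)^(max 1 k) := pow_le_pow_right₀ hB2.le (Nat.le_max_right 1 k)
    have hpos : (0:ℝ) < (B^2)^ρ := Real.rpow_pos_of_pos (by positivity) ρ
    have : (B^2)^(-ρ) * C ≤ (B^2)^(-ρ) * (B^2)^ρ :=
      mul_le_mul_of_nonneg_left hkle (Real.rpow_nonneg (by positivity) _)
    calc (B^2)^(-ρ) * C ≤ (B^2)^(-ρ) * (B^2)^ρ := this
      _ = 1 := by
        rw [← Real.rpow_add (by positivity : (0:ℝ) < B^2)]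
        norm_num
  calc fnB {m : ℕ | 1 ≤ m} B n ρ ≤ (∑' a : {m : ℕ | 1 ≤ m}, g (a : ℕ)) ^ n := step1
    _ ≤ (ENNReal.ofReal ((B^2)^(-ρ) * C)) ^ n := by
        exact pow_le_pow_left' (le_trans step2 step3) n
    _ ≤ 1 := pow_le_one' (by
        rw [← ENNReal.ofReal_one]
        exact ENNReal.ofReal_le_ofReal step4) n


/-! ### Growth in ρ, truncation, and snB facts -/

lemma fnB_growth (A : Set ℕ) {B : ℝ} (hB : 1 ≤ B) {ρ ρ' : ℝ} (h : ρ ≤ ρ') (n : ℕ) :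
    ENNReal.ofReal ((B ^ (2*n)) ^ (ρ' - ρ)) * fnB A B n ρ' ≤ fnB A B n ρ := by
  rw [fnB_eq, fnB_eq, ← ENNReal.tsum_mul_left]
  refine ENNReal.tsum_le_tsum fun v => ?_
  set w : Fin n → ℕ := fun i => (v i : ℕ) with hw
  unfold tm
  set X := B ^ (2*n) * ((qEven (List.ofFn w) : ℝ))^2 with hX
  have hX1 : (1:ℝ) ≤ X := one_le_X hB n w
  have hXpos : (0:ℝ) < X := lt_of_lt_of_le one_pos hX1
  have hBX : B ^ (2*n) ≤ X := by
    rw [hX]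
    have hq : (1:ℝ) ≤ ((qEven (List.ofFn w) : ℝ)) := by exact_mod_cast one_le_qEven _
    have hq2 : (1:ℝ) ≤ ((qEven (List.ofFn w) : ℝ))^2 := by nlinarith
    nlinarith [pow_pos (lt_of_lt_of_le one_pos hB) (2*n)]
  have hb : (B ^ (2*n)) ^ (ρ' - ρ) ≤ X ^ (ρ' - ρ) :=
    Real.rpow_le_rpow (by positivity) hBX (by linarith)
  rw [← ENNReal.ofReal_mul (Real.rpow_nonneg (by positivity) _)]
  apply ENNReal.ofReal_le_ofReal
  calc (B ^ (2*n)) ^ (ρ' - ρ) * X ^ (-ρ') ≤ X ^ (ρ' - ρ) * X ^ (-ρ') :=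
        mul_le_mul_of_nonneg_right hb (Real.rpow_nonneg hXpos.le _)
    _ = X ^ (-ρ) := by
        rw [← Real.rpow_add hXpos]
        congr 1
        ring

lemma lt_fnB_trunc {B ρ : ℝ} {n : ℕ} {c : ENNReal} (h : c < fnB {m : ℕ | 1 ≤ m} B n ρ) :
    ∃ α : ℕ, 1 ≤ α ∧ c < fnB {m : ℕ | 1 ≤ m ∧ m ≤ α} B n ρ := by
  classical
  rw [fnB_eq, ENNReal.tsum_eq_iSup_sum] at h
  obtain ⟨s, hs⟩ := lt_iSup_iff.1 h
  set M : ℕ := s.sup (fun v => Finset.univ.sup (fun i => (v i : ℕ))) with hM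
  refine ⟨max 1 M, le_max_left _ _, lt_of_lt_of_le hs ?_⟩
  set A' : Set ℕ := {m : ℕ | 1 ≤ m ∧ m ≤ max 1 M} with hA'
  have hmem : ∀ v ∈ s, ∀ i : Fin n, ((v i : ℕ)) ∈ A' := by
    intro v hv i
    have h1 : ((v i : ℕ)) ≤ Finset.univ.sup (fun i => ((v i : ℕ))) :=
      Finset.le_sup (f := fun i => ((v i : ℕ))) (Finset.mem_univ i)
    have h2 : Finset.univ.sup (fun i => ((v i : ℕ))) ≤ M :=
      Finset.le_sup (f := fun v : Fin n → {m : ℕ | 1 ≤ m} =>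
        Finset.univ.sup (fun i => (v i : ℕ))) hv
    exact ⟨(v i).2, le_trans (le_trans h1 h2) (le_max_right 1 M)⟩
  set j : {v : Fin n → {m : ℕ | 1 ≤ m} // v ∈ s} → (Fin n → A') :=
    (fun x => fun i => ⟨(x.1 i : ℕ), hmem x.1 x.2 i⟩) with hj
  have hjinj : Function.Injective j := by
    intro x y hxy
    apply Subtype.ext
    funext i
    apply Subtype.ext
    have h1 := congrFun hxy i
    simp only [hj, Subtype.mk.injEq] at h1
    exact h1
  rw [fnB_eq]
  calc (∑ v ∈ s, tm B ρ n (fun i => (v i : ℕ)))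
      = ∑ x ∈ s.attach, tm B ρ n (fun i => ((x.1 : Fin n → {m : ℕ | 1 ≤ m}) i : ℕ)) :=
        (Finset.sum_attach s _).symm
    _ = ∑ x ∈ s.attach, tm B ρ n (fun i => ((j x) i : ℕ)) := rfl
    _ = ∑ y ∈ s.attach.image j, tm B ρ n (fun i => ((y i : ℕ))) :=
        (Finset.sum_image (g := j) (f := fun y : Fin n → A' => tm B ρ n fun i => ((y i : ℕ)))
          (fun x _ y _ hxy => hjinj hxy)).symm
    _ ≤ ∑' y : Fin n → A', tm B ρ n (fun i => ((y i : ℕ))) := ENNReal.sum_le_tsum _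

lemma snB_le_of_mem {A : Set ℕ} {B ρ : ℝ} {n : ℕ} (h0 : 0 ≤ ρ) (h1 : fnB A B n ρ ≤ 1) :
    snB A B n ≤ ρ :=
  csInf_le ⟨0, fun x hx => hx.1⟩ ⟨h0, h1⟩

lemma snB_nonneg {A : Set ℕ} {B : ℝ} {n : ℕ}
    (hne : Set.Nonempty {ρ : ℝ | 0 ≤ ρ ∧ fnB A B n ρ ≤ 1}) :
    0 ≤ snB A B n :=
  le_csInf hne (fun x hx => hx.1)

lemma le_snB {A : Set ℕ} {B : ℝ} (hB : 1 ≤ B) {ρ : ℝ} {n : ℕ} (hgt : 1 < fnB A B n ρ)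
    (hne : Set.Nonempty {ρ' : ℝ | 0 ≤ ρ' ∧ fnB A B n ρ' ≤ 1}) : ρ ≤ snB A B n := by
  refine le_csInf hne fun x hx => ?_
  by_contra hlt
  push_neg at hlt
  exact absurd (le_trans (fnB_anti A hB hlt.le n) hx.2) (not_le.2 hgt)

lemma snB_mono {A A' : Set ℕ} (h : A ⊆ A') {B : ℝ} {n : ℕ}
    (hne : Set.Nonempty {ρ : ℝ | 0 ≤ ρ ∧ fnB A' B n ρ ≤ 1}) :
    snB A B n ≤ snB A' B n :=
  csInf_le_csInf ⟨0, fun x hx => hx.1⟩ hne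
    (fun ρ hρ => ⟨hρ.1, le_trans (fnB_mono_set h B n ρ) hρ.2⟩)


end SBaux

/-- Lemma 2.6: for `B > 1`, `lim_{α→∞} s_B(α) = s_B`, where `s_B(α)` is the quantity
for the truncated alphabet `{1, …, α}` and `s_B` the one for all positive integers. -/
theorem sB_alpha_tendsto_sB (B : ℝ) (hB : 1 < B) (sBα : ℕ → ℝ) (sB : ℝ)
    (hα : ∀ α : ℕ, 1 ≤ α →
      Tendsto (fun n => snB {m : ℕ | 1 ≤ m ∧ m ≤ α} B n) atTop (nhds (sBα α)))
    (hs : Tendsto (fun n => snB {m : ℕ | 1 ≤ m} B n) atTop (nhds sB)) :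
    Tendsto sBα atTop (nhds sB) := by
  classical
  obtain ⟨ρs, hρs1, hρs⟩ := SBaux.exists_rho_star hB
  have hρs0 : (0:ℝ) ≤ ρs := by linarith
  have hB1 : (1:ℝ) ≤ B := hB.le
  have hsub : ∀ α : ℕ, {m : ℕ | 1 ≤ m ∧ m ≤ α} ⊆ {m : ℕ | 1 ≤ m} := fun α m hm => hm.1
  have hmemρs : ∀ (A : Set ℕ), A ⊆ {m : ℕ | 1 ≤ m} → ∀ n : ℕ,
      ρs ∈ {ρ : ℝ | 0 ≤ ρ ∧ fnB A B n ρ ≤ 1} :=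
    fun A hA n => ⟨hρs0, le_trans (SBaux.fnB_mono_set hA B n ρs) (hρs n)⟩
  have hupper : ∀ α : ℕ, 1 ≤ α → sBα α ≤ sB := by
    intro α h1
    refine le_of_tendsto_of_tendsto' (hα α h1) hs fun n => ?_
    exact SBaux.snB_mono (hsub α) ⟨ρs, hmemρs {m : ℕ | 1 ≤ m} (fun m hm => hm) n⟩
  have hmono : ∀ α α' : ℕ, 1 ≤ α → α ≤ α' → sBα α ≤ sBα α' := by
    intro α α' h1 hle
    refine le_of_tendsto_of_tendsto' (hα α h1) (hα α' (le_trans h1 hle)) fun n => ?_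
    exact SBaux.snB_mono (A := {m : ℕ | 1 ≤ m ∧ m ≤ α}) (A' := {m : ℕ | 1 ≤ m ∧ m ≤ α'})
      (fun m hm => ⟨hm.1, le_trans hm.2 hle⟩) ⟨ρs, hmemρs _ (hsub α') n⟩
  have hnonneg : ∀ α : ℕ, 1 ≤ α → 0 ≤ sBα α := by
    intro α h1
    refine ge_of_tendsto' (hα α h1) fun n => ?_
    exact SBaux.snB_nonneg ⟨ρs, hmemρs _ (hsub α) n⟩
  rw [tendsto_order]
  constructor
  · intro c hc
    by_cases hc0 : c < 0
    · filter_upwards [eventually_ge_atTop 1] with α h1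
      exact lt_of_lt_of_le hc0 (hnonneg α h1)
    push_neg at hc0
    set ρ : ℝ := (c + sB)/2 with hρdef
    set ρ'' : ℝ := (ρ + sB)/2 with hρ''def
    have hcρ : c < ρ := by rw [hρdef]; linarith
    have hρρ'' : ρ < ρ'' := by rw [hρ''def, hρdef]; linarith
    have hρ''sB : ρ'' < sB := by rw [hρ''def, hρdef]; linarith
    have hρ0 : 0 < ρ := lt_of_le_of_lt hc0 hcρ
    have hρ''0 : (0:ℝ) ≤ ρ'' := by linarith
    -- the full-alphabet sums exceed 1 below sB
    have hfull : ∀ n : ℕ, 1 ≤ n → 1 < fnB {m : ℕ | 1 ≤ m} B n ρ'' := by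
      intro n hn
      by_contra hle
      push_neg at hle
      have hmul : ∀ k : ℕ, fnB {m : ℕ | 1 ≤ m} B ((k+1) * n) ρ'' ≤ 1 := by
        intro k
        induction k with
        | zero => simpa using hle
        | succ k ih =>
          have hstep : fnB {m : ℕ | 1 ≤ m} B ((k+1+1)*n) ρ''
              ≤ fnB {m : ℕ | 1 ≤ m} B ((k+1)*n) ρ'' * fnB {m : ℕ | 1 ≤ m} B n ρ'' := by
            rw [show (k+1+1)*n = (k+1)*n + n by ring]
            exact SBaux.fnB_submul _ hB1 hρ''0 ((k+1)*n) n
          calc fnB {m : ℕ | 1 ≤ m} B ((k+1+1)*n) ρ'' ≤ _ * _ := hstep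
            _ ≤ 1 * 1 := mul_le_mul' ih hle
            _ = 1 := by simp
      have htmul : Tendsto (fun k : ℕ => (k+1)*n) atTop atTop := by
        apply tendsto_atTop_mono (f := id) (fun k => ?_) tendsto_id
        calc id k ≤ k + 1 := Nat.le_succ k
          _ ≤ (k+1)*n := Nat.le_mul_of_pos_right _ (lt_of_lt_of_le Nat.zero_lt_one hn)
      have htend : Tendsto (fun k : ℕ => snB {m : ℕ | 1 ≤ m} B ((k+1) * n)) atTop (nhds sB) :=
        hs.comp htmul
      have : sB ≤ ρ'' :=
        le_of_tendsto' htend fun k => SBaux.snB_le_of_mem hρ''0 (hmul k)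
      linarith
    -- choose n with fnB (full) n ρ large
    set δ : ℝ := ρ'' - ρ with hδdef
    have hδ0 : 0 < δ := by rw [hδdef]; linarith
    set b : ℝ := (B^2) ^ δ with hbdef
    have hB2 : (1:ℝ) < B^2 := by nlinarith
    have hb1 : 1 < b := by
      rw [hbdef]
      exact (Real.one_lt_rpow_iff_of_pos (by positivity)).2 (Or.inl ⟨hB2, hδ0⟩)
    obtain ⟨n0, hn0⟩ := pow_unbounded_of_one_lt ((4:ℝ)^ρ) hb1
    set n : ℕ := n0 + 1 with hndef
    have hn1 : 1 ≤ n := Nat.succ_le_succ (Nat.zero_le n0)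
    have hbn : (4:ℝ)^ρ < b^n := lt_of_lt_of_le hn0 (pow_le_pow_right₀ hb1.le (Nat.le_succ n0))
    have hbn_eq : b ^ n = (B ^ (2*n)) ^ δ := by
      rw [hbdef, show B ^ (2*n) = (B^2)^n from by rw [pow_mul],
        ← Real.rpow_natCast ((B^2) ^ δ) n, ← Real.rpow_natCast (B^2) n,
        ← Real.rpow_mul (by positivity), ← Real.rpow_mul (by positivity), mul_comm]
    have hlarge : ENNReal.ofReal ((4:ℝ)^ρ) < fnB {m : ℕ | 1 ≤ m} B n ρ := by
      have h2 : (1:ENNReal) ≤ fnB {m : ℕ | 1 ≤ m} B n ρ'' := (hfull n hn1).le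
      calc ENNReal.ofReal ((4:ℝ)^ρ) < ENNReal.ofReal (b^n) :=
            (ENNReal.ofReal_lt_ofReal_iff (by positivity)).2 hbn
        _ = ENNReal.ofReal ((B ^ (2*n)) ^ δ) * 1 := by rw [hbn_eq, mul_one]
        _ ≤ ENNReal.ofReal ((B ^ (2*n)) ^ δ) * fnB {m : ℕ | 1 ≤ m} B n ρ'' :=
            mul_le_mul_right h2 _
        _ ≤ fnB {m : ℕ | 1 ≤ m} B n ρ := by
            rw [hδdef]
            exact SBaux.fnB_growth _ hB1 hρρ''.le n
    obtain ⟨α₀, hα₀1, hα₀⟩ := SBaux.lt_fnB_trunc hlarge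
    have hA1 : ∀ a ∈ {m : ℕ | 1 ≤ m ∧ m ≤ α₀}, 1 ≤ a := fun a ha => ha.1
    have hiter : ∀ k : ℕ,
        ENNReal.ofReal ((4:ℝ)^ρ) ≤ fnB {m : ℕ | 1 ≤ m ∧ m ≤ α₀} B ((k+1)*n) ρ := by
      intro k
      induction k with
      | zero => simpa using hα₀.le
      | succ k ih =>
        have hsup := SBaux.fnB_supermul hA1 hB1 hρ0.le ((k+1)*n) n
        have hchain : ENNReal.ofReal ((4:ℝ)^(-ρ)) *
            (ENNReal.ofReal ((4:ℝ)^ρ) * ENNReal.ofReal ((4:ℝ)^ρ))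
            ≤ ENNReal.ofReal ((4:ℝ)^(-ρ)) *
              (fnB {m : ℕ | 1 ≤ m ∧ m ≤ α₀} B ((k+1)*n) ρ * fnB {m : ℕ | 1 ≤ m ∧ m ≤ α₀} B n ρ) :=
          mul_le_mul_right (mul_le_mul' ih hα₀.le) _
        have hconst : ENNReal.ofReal ((4:ℝ)^(-ρ)) *
            (ENNReal.ofReal ((4:ℝ)^ρ) * ENNReal.ofReal ((4:ℝ)^ρ)) = ENNReal.ofReal ((4:ℝ)^ρ) := by
          rw [← ENNReal.ofReal_mul (Real.rpow_nonneg (by norm_num) _),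
            ← ENNReal.ofReal_mul (Real.rpow_nonneg (by norm_num) _)]
          congr 1
          rw [← Real.rpow_add (by norm_num : (0:ℝ) < 4),
            ← Real.rpow_add (by norm_num : (0:ℝ) < 4)]
          congr 1
          ring
        calc ENNReal.ofReal ((4:ℝ)^ρ)
            = ENNReal.ofReal ((4:ℝ)^(-ρ)) *
              (ENNReal.ofReal ((4:ℝ)^ρ) * ENNReal.ofReal ((4:ℝ)^ρ)) := hconst.symm
          _ ≤ ENNReal.ofReal ((4:ℝ)^(-ρ)) *
              (fnB {m : ℕ | 1 ≤ m ∧ m ≤ α₀} B ((k+1)*n) ρ * fnB {m : ℕ | 1 ≤ m ∧ m ≤ α₀} B n ρ) :=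
            hchain
          _ ≤ fnB {m : ℕ | 1 ≤ m ∧ m ≤ α₀} B ((k+1)*n + n) ρ := hsup
          _ = fnB {m : ℕ | 1 ≤ m ∧ m ≤ α₀} B ((k+1+1)*n) ρ := by
              rw [show (k+1+1)*n = (k+1)*n + n by ring]
    have h4gt1 : (1:ENNReal) < ENNReal.ofReal ((4:ℝ)^ρ) := by
      rw [← ENNReal.ofReal_one]
      refine (ENNReal.ofReal_lt_ofReal_iff (by positivity)).2 ?_
      exact (Real.one_lt_rpow_iff_of_pos (by norm_num)).2 (Or.inl ⟨by norm_num, hρ0⟩)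
    have hsnBα0 : ∀ k : ℕ, ρ ≤ snB {m : ℕ | 1 ≤ m ∧ m ≤ α₀} B ((k+1)*n) := by
      intro k
      refine SBaux.le_snB hB1 (lt_of_lt_of_le h4gt1 (hiter k)) ?_
      exact ⟨ρs, hmemρs _ (hsub α₀) _⟩
    have htmul : Tendsto (fun k : ℕ => (k+1)*n) atTop atTop := by
      apply tendsto_atTop_mono (f := id) (fun k => ?_) tendsto_id
      calc id k ≤ k + 1 := Nat.le_succ k
        _ ≤ (k+1)*n := Nat.le_mul_of_pos_right _ (lt_of_lt_of_le Nat.zero_lt_one hn1)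
    have hsBα0 : ρ ≤ sBα α₀ :=
      ge_of_tendsto' ((hα α₀ hα₀1).comp htmul) hsnBα0
    filter_upwards [eventually_ge_atTop α₀] with α hαα₀
    exact lt_of_lt_of_le hcρ (le_trans hsBα0 (hmono α₀ α hα₀1 hαα₀))
  · intro c hc
    filter_upwards [eventually_ge_atTop 1] with α h1
    exact lt_of_le_of_lt (hupper α h1) hc
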